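/- arXiv:2206.09373 — 2 statements merged into one kernel-verified Lean document; each statement's English description precedes it below -/
import Mathlib

section
/- Fix n ≥ 1 and 0 ≤ k ≤ n, and let Ω := {x ∈ ℝⁿ : |x_i| < 1 for all i}. Then v_k(0) − u_k(0) = 1/2; for every x in the closure of Ω with x ≠ 0 one has v_k(x) − u_k(x) < 1/2 (so v_k − u_k has a strict maximum over the closed cube at the origin); and v_k(x) − u_k(x) ≤ 0 for every x ∈ ∂Ω, i.e. for every x with |x_i| ≤ 1 for all i and |x_j| = 1 for at least one index j. -/
open Real Filter Topology

open scoped Classical in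
noncomputable def slF {n : ℕ} (X : Matrix (Fin n) (Fin n) ℝ) : ℝ :=
  if hX : X.IsHermitian then ∑ i, Real.arctan (hX.eigenvalues i) else 0

noncomputable def hess {n : ℕ} (φ : EuclideanSpace ℝ (Fin n) → ℝ)
    (x : EuclideanSpace ℝ (Fin n)) : Matrix (Fin n) (Fin n) ℝ :=
  fun i j => iteratedFDeriv ℝ 2 φ x ![EuclideanSpace.single i 1, EuclideanSpace.single j 1]

def IsSubsolution {n : ℕ} (Ω : Set (EuclideanSpace ℝ (Fin n)))
    (v f : EuclideanSpace ℝ (Fin n) → ℝ) : Prop :=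
  ∀ x ∈ Ω, ∀ φ : EuclideanSpace ℝ (Fin n) → ℝ,
    ContDiffAt ℝ 2 φ x → (∀ᶠ y in 𝓝 x, v y ≤ φ y) → φ x = v x → f x ≤ slF (hess φ x)

def IsSupersolution {n : ℕ} (Ω : Set (EuclideanSpace ℝ (Fin n)))
    (u f : EuclideanSpace ℝ (Fin n) → ℝ) : Prop :=
  ∀ x ∈ Ω, ∀ ψ : EuclideanSpace ℝ (Fin n) → ℝ,
    ContDiffAt ℝ 2 ψ x → (∀ᶠ y in 𝓝 x, ψ y ≤ u y) → ψ x = u x → slF (hess ψ x) ≤ f x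

noncomputable def vFun (n k : ℕ) (x : EuclideanSpace ℝ (Fin n)) : ℝ :=
  1/4 - ∑ i ∈ Finset.univ.filter (fun i : Fin n => (i : ℕ) < k), |x i|
      + ∑ i ∈ Finset.univ.filter (fun i : Fin n => k ≤ (i : ℕ)), (1/2) * |x i| ^ ((3:ℝ)/2)

noncomputable def phaseTerm (t : ℝ) : ℝ :=
  if t = 0 then π / 2 else Real.arctan ((3/8) * |t| ^ (-(1:ℝ)/2))

noncomputable def fFun (n k : ℕ) (x : EuclideanSpace ℝ (Fin n)) : ℝ :=
  - ∑ i ∈ Finset.univ.filter (fun i : Fin n => (i : ℕ) < k), phaseTerm (x i)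
  + ∑ i ∈ Finset.univ.filter (fun i : Fin n => k ≤ (i : ℕ)), phaseTerm (x i)

def revVec {n : ℕ} (x : EuclideanSpace ℝ (Fin n)) : EuclideanSpace ℝ (Fin n) :=
  WithLp.toLp 2 (fun i : Fin n => x i.rev)

noncomputable def uFun (n k : ℕ) (x : EuclideanSpace ℝ (Fin n)) : ℝ :=
  - vFun n (n - k) (revVec x)

def exch (n : ℕ) : Matrix (Fin n) (Fin n) ℝ :=
  fun i j => if j = i.rev then 1 else 0

lemma key_eq (n k : ℕ) (hk : k ≤ n) (x : EuclideanSpace ℝ (Fin n)) :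
    vFun n k x - uFun n k x
      = 1/2 + ∑ i : Fin n, ((1/2) * |x i| ^ ((3:ℝ)/2) - |x i|) := by
  have h1 : ∑ i ∈ Finset.univ.filter (fun i : Fin n => (i : ℕ) < n - k), |revVec x i|
      = ∑ i ∈ Finset.univ.filter (fun i : Fin n => k ≤ (i : ℕ)), |x i| := by
    rw [Finset.sum_filter, Finset.sum_filter]
    rw [← Equiv.sum_comp Fin.revPerm (fun i => if (i : ℕ) < n - k then |revVec x i| else 0)]
    refine Finset.sum_congr rfl fun i _ => ?_
    have hi : (i : ℕ) < n := i.isLt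
    have hrev : ((Fin.revPerm i : Fin n) : ℕ) = n - 1 - (i : ℕ) := by
      simp [Fin.rev]; omega
    have hcond : ((Fin.revPerm i : Fin n) : ℕ) < n - k ↔ k ≤ (i : ℕ) := by
      rw [hrev]; omega
    have hval : revVec x (Fin.revPerm i) = x i := congrArg x (Fin.rev_rev i)
    rw [hval, if_congr hcond rfl rfl]
  have h2 : ∑ i ∈ Finset.univ.filter (fun i : Fin n => n - k ≤ (i : ℕ)),
        (1/2) * |revVec x i| ^ ((3:ℝ)/2)
      = ∑ i ∈ Finset.univ.filter (fun i : Fin n => (i : ℕ) < k),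
        (1/2) * |x i| ^ ((3:ℝ)/2) := by
    rw [Finset.sum_filter, Finset.sum_filter]
    rw [← Equiv.sum_comp Fin.revPerm
      (fun i => if n - k ≤ (i : ℕ) then (1/2) * |revVec x i| ^ ((3:ℝ)/2) else 0)]
    refine Finset.sum_congr rfl fun i _ => ?_
    have hi : (i : ℕ) < n := i.isLt
    have hrev : ((Fin.revPerm i : Fin n) : ℕ) = n - 1 - (i : ℕ) := by
      simp [Fin.rev]; omega
    have hcond : n - k ≤ ((Fin.revPerm i : Fin n) : ℕ) ↔ (i : ℕ) < k := by
      rw [hrev]; omega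
    have hval : revVec x (Fin.revPerm i) = x i := congrArg x (Fin.rev_rev i)
    rw [hval, if_congr hcond rfl rfl]
  have hsplit : ∑ i : Fin n, ((1/2) * |x i| ^ ((3:ℝ)/2) - |x i|)
      = ∑ i ∈ Finset.univ.filter (fun i : Fin n => (i : ℕ) < k),
          ((1/2) * |x i| ^ ((3:ℝ)/2) - |x i|)
        + ∑ i ∈ Finset.univ.filter (fun i : Fin n => k ≤ (i : ℕ)),
          ((1/2) * |x i| ^ ((3:ℝ)/2) - |x i|) := by
    rw [← Finset.sum_filter_add_sum_filter_not Finset.univ (fun i : Fin n => (i : ℕ) < k)]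
    congr 1
    exact Finset.sum_congr (by ext i; simp [Nat.not_lt]) (fun _ _ => rfl)
  simp only [uFun, vFun]
  rw [h1, h2, hsplit]
  simp only [Finset.sum_sub_distrib]
  ring

lemma term_nonpos {t : ℝ} (ht : |t| ≤ 1) : (1/2) * |t| ^ ((3:ℝ)/2) - |t| ≤ 0 := by
  rcases eq_or_lt_of_le (abs_nonneg t) with h0 | h0
  · rw [← h0, Real.zero_rpow (by norm_num)]; norm_num
  · have h : |t| ^ ((3:ℝ)/2) ≤ |t| ^ (1:ℝ) :=
      Real.rpow_le_rpow_of_exponent_ge h0 ht (by norm_num)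
    rw [Real.rpow_one] at h
    nlinarith [abs_nonneg t]

lemma term_neg {t : ℝ} (ht : |t| ≤ 1) (hne : t ≠ 0) :
    (1/2) * |t| ^ ((3:ℝ)/2) - |t| < 0 := by
  have h0 : 0 < |t| := abs_pos.mpr hne
  have h : |t| ^ ((3:ℝ)/2) ≤ |t| ^ (1:ℝ) :=
    Real.rpow_le_rpow_of_exponent_ge h0 ht (by norm_num)
  rw [Real.rpow_one] at h
  nlinarith


theorem stmt12 (n k : ℕ) (hn : 1 ≤ n) (hk : k ≤ n) :
    vFun n k 0 - uFun n k 0 = 1/2 ∧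
    (∀ x : EuclideanSpace ℝ (Fin n), (∀ i, |x i| ≤ 1) → x ≠ 0 →
      vFun n k x - uFun n k x < 1/2) ∧
    (∀ x : EuclideanSpace ℝ (Fin n), (∀ i, |x i| ≤ 1) → (∃ j, |x j| = 1) →
      vFun n k x - uFun n k x ≤ 0) := by
  refine ⟨?_, ?_, ?_⟩
  · rw [key_eq n k hk]
    have : ∀ i : Fin n, (1/2) * |(0 : EuclideanSpace ℝ (Fin n)) i| ^ ((3:ℝ)/2)
        - |(0 : EuclideanSpace ℝ (Fin n)) i| = 0 := by
      intro i
      have : (0 : EuclideanSpace ℝ (Fin n)) i = 0 := rfl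
      rw [this, abs_zero, Real.zero_rpow (by norm_num)]
      ring
    rw [Finset.sum_congr rfl (fun i _ => this i), Finset.sum_const_zero]
    ring
  · intro x hx hne
    rw [key_eq n k hk]
    have hex : ∃ i, x i ≠ 0 := by
      by_contra h
      push_neg at h
      exact hne (PiLp.ext h)
    obtain ⟨i, hi⟩ := hex
    have hsum : ∑ j : Fin n, ((1/2) * |x j| ^ ((3:ℝ)/2) - |x j|) < ∑ _j : Fin n, (0:ℝ) := by
      refine Finset.sum_lt_sum (fun j _ => term_nonpos (hx j)) ⟨i, Finset.mem_univ i, ?_⟩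
      exact term_neg (hx i) hi
    rw [Finset.sum_const_zero] at hsum
    linarith
  · intro x hx ⟨j, hj⟩
    rw [key_eq n k hk]
    have hjval : (1/2) * |x j| ^ ((3:ℝ)/2) - |x j| = -(1/2) := by
      rw [hj, Real.one_rpow]; ring
    have hrest : ∑ i ∈ Finset.univ.erase j, ((1/2) * |x i| ^ ((3:ℝ)/2) - |x i|) ≤ 0 :=
      Finset.sum_nonpos (fun i _ => term_nonpos (hx i))
    have hsum : ∑ i : Fin n, ((1/2) * |x i| ^ ((3:ℝ)/2) - |x i|) ≤ -(1/2) := by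
      calc ∑ i : Fin n, ((1/2) * |x i| ^ ((3:ℝ)/2) - |x i|)
          = ((1/2) * |x j| ^ ((3:ℝ)/2) - |x j|)
            + ∑ i ∈ Finset.univ.erase j, ((1/2) * |x i| ^ ((3:ℝ)/2) - |x i|) :=
            (Finset.add_sum_erase Finset.univ
              (fun i : Fin n => (1/2) * |x i| ^ ((3:ℝ)/2) - |x i|) (Finset.mem_univ j)).symm
        _ ≤ -(1/2) + 0 := add_le_add (le_of_eq hjval) hrest
        _ = -(1/2) := by ring
    linarith
end

section
/- Fix n ≥ 1. Let w : ℝⁿ → ℝ be w(x) := |x|^{3/2}, where |x| is the Euclidean norm, and let f : ℝⁿ → ℝ be the continuous extension of x ↦ F(Hess w(x)) from ℝⁿ \ {0}, i.e. f(x) = arctan((3/4)|x|^{−1/2}) + (n−1)·arctan((3/2)|x|^{−1/2}) for x ≠ 0 and f(0) = nπ/2. Then w is a viscosity solution (both a viscosity subsolution and a viscosity supersolution) of F(Hess w) = f(x) in ℝⁿ. -/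
open Real Filter Topology

/-! ### Auxiliary lemmas -/

section OneDim

/-- If `g` is C² near 0, `g'(0)=0` and `g''(0)<0`, then `g t < g 0` for small `t ≠ 0`. -/
lemma oneDimNeg {g : ℝ → ℝ} (hg : ContDiffAt ℝ 2 g 0) (h0 : deriv g 0 = 0)
    (hneg : deriv (deriv g) 0 < 0) :
    ∃ δ > 0, ∀ t : ℝ, |t| < δ → t ≠ 0 → g t < g 0 := by
  obtain ⟨s, hs_mem, hcd⟩ := hg.contDiffOn (le_refl 2) (by simp)
  obtain ⟨s', hs's, hs'open, h0s'⟩ := mem_nhds_iff.1 hs_mem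
  have hcd' : ContDiffOn ℝ 2 g s' := hcd.mono hs's
  have hder1 : ContDiffOn ℝ 1 (deriv g) s' :=
    hcd'.deriv_of_isOpen hs'open (by norm_num)
  have hcont2 : ContinuousOn (deriv (deriv g)) s' :=
    hder1.continuousOn_deriv_of_isOpen hs'open (by norm_num)
  have hc2at : ContinuousAt (deriv (deriv g)) 0 :=
    hcont2.continuousAt (hs'open.mem_nhds h0s')
  have hev : ∀ᶠ t in 𝓝 (0:ℝ), deriv (deriv g) t < 0 :=
    hc2at.eventually_lt continuousAt_const hneg
  obtain ⟨δ, hδpos, hδ⟩ := Metric.eventually_nhds_iff_ball.1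
    (hev.and (hs'open.eventually_mem h0s'))
  set I : Set ℝ := Set.Ioo (-δ) δ with hI
  have hIsub : I ⊆ Metric.ball 0 δ := by
    intro t ht
    simp only [Metric.mem_ball, Real.dist_eq, sub_zero]
    rw [abs_lt]; exact ⟨ht.1, ht.2⟩
  have hIs' : I ⊆ s' := fun t ht => (hδ t (hIsub ht)).2
  have hg_diff : ∀ t ∈ I, DifferentiableAt ℝ g t := fun t ht =>
    ((hcd'.differentiableOn (by norm_num)).differentiableAt
      (hs'open.mem_nhds (hIs' ht)))
  have hg'_cont : ContinuousOn (deriv g) I := (hder1.continuousOn).mono hIs'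
  have hg'' : ∀ t ∈ I, deriv (deriv g) t < 0 := fun t ht => (hδ t (hIsub ht)).1
  have h0I : (0:ℝ) ∈ I := by constructor <;> simp [hδpos]
  have hanti : StrictAntiOn (deriv g) I := by
    apply strictAntiOn_of_deriv_neg (convex_Ioo _ _) hg'_cont
    intro t ht
    rw [interior_Ioo] at ht
    exact hg'' t ht
  refine ⟨δ, hδpos, fun t ht htne => ?_⟩
  have htI : t ∈ I := by
    rw [hI]; constructor <;> [linarith [neg_abs_le t, abs_lt.1 ht]; linarith [le_abs_self t]]
  rcases lt_or_gt_of_ne htne with htlt | htgt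
  · have hmono : StrictMonoOn g (Set.Icc t 0) := by
      apply strictMonoOn_of_deriv_pos (convex_Icc _ _)
      · exact ContinuousOn.mono (fun y hy => (hg_diff y hy).continuousAt.continuousWithinAt)
          (fun y hy => ⟨lt_of_lt_of_le htI.1 hy.1, lt_of_le_of_lt hy.2 h0I.2⟩)
      · intro y hy
        rw [interior_Icc] at hy
        have hyI : y ∈ I := ⟨lt_trans htI.1 hy.1, lt_trans hy.2 h0I.2⟩
        have := hanti hyI h0I hy.2
        rw [h0] at this; linarith
    exact hmono (by constructor <;> simp [le_of_lt htlt])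
      (by constructor <;> simp [le_of_lt htlt]) htlt
  · have hmono : StrictAntiOn g (Set.Icc 0 t) := by
      apply strictAntiOn_of_deriv_neg (convex_Icc _ _)
      · exact ContinuousOn.mono (fun y hy => (hg_diff y hy).continuousAt.continuousWithinAt)
          (fun y hy => ⟨lt_of_lt_of_le h0I.1 hy.1, lt_of_le_of_lt hy.2 htI.2⟩)
      · intro y hy
        rw [interior_Icc] at hy
        have hyI : y ∈ I := ⟨lt_trans h0I.1 hy.1, lt_trans hy.2 htI.2⟩
        have := hanti h0I hyI hy.1
        rw [h0] at this; linarith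
    exact hmono (by constructor <;> simp [le_of_lt htgt])
      (by constructor <;> simp [le_of_lt htgt]) htgt

end OneDim

section SecondDerivTest

variable {E : Type*} [NormedAddCommGroup E] [NormedSpace ℝ E]

lemma eventually_differentiableAt {φ : E → ℝ} {x : E} (hφ : ContDiffAt ℝ 2 φ x) :
    ∀ᶠ y in 𝓝 x, DifferentiableAt ℝ φ y := by
  obtain ⟨s, hs_mem, hcd⟩ := hφ.contDiffOn (le_refl 2) (by simp)
  obtain ⟨s', hs's, hs'open, h0s'⟩ := mem_nhds_iff.1 hs_mem
  filter_upwards [hs'open.eventually_mem h0s'] with y hy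
  exact ((hcd.mono hs's).differentiableOn (by norm_num)).differentiableAt
    (hs'open.mem_nhds hy)

lemma fderiv_differentiableAt {φ : E → ℝ} {x : E} (hφ : ContDiffAt ℝ 2 φ x) :
    DifferentiableAt ℝ (fderiv ℝ φ) x :=
  (hφ.fderiv_right (m := 1) (by norm_num)).differentiableAt (by norm_num)

lemma deriv_differentiableAt {g : ℝ → ℝ} {x : ℝ} (hg : ContDiffAt ℝ 2 g x) :
    DifferentiableAt ℝ (deriv g) x := by
  obtain ⟨s, hs_mem, hcd⟩ := hg.contDiffOn (le_refl 2) (by simp)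
  obtain ⟨s', hs's, hs'open, h0s'⟩ := mem_nhds_iff.1 hs_mem
  exact (((hcd.mono hs's).deriv_of_isOpen (m := 1) hs'open (by norm_num)).differentiableOn
    (by norm_num)).differentiableAt (hs'open.mem_nhds h0s')

/-- Second derivative test: at a local minimum, the second derivative is positive
semidefinite. -/
lemma secondDerivTest {φ : E → ℝ} {x : E} (hφ : ContDiffAt ℝ 2 φ x)
    (hmin : ∀ᶠ y in 𝓝 x, φ x ≤ φ y) (u : E) :
    0 ≤ fderiv ℝ (fderiv ℝ φ) x u u := by
  by_contra hlt
  push_neg at hlt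
  set ℓ : ℝ → E := fun t => x + t • u with hℓ
  have hℓ0 : ℓ 0 = x := by simp [hℓ]
  have hℓcont : Continuous ℓ := continuous_const.add (continuous_id.smul continuous_const)
  have hℓtendsto : Filter.Tendsto ℓ (𝓝 0) (𝓝 x) := by
    have := hℓcont.tendsto 0
    rwa [hℓ0] at this
  set g : ℝ → ℝ := fun t => φ (ℓ t) with hg
  have hgC2 : ContDiffAt ℝ 2 g 0 := by
    apply ContDiffAt.comp (x := 0)
    · rw [hℓ0]; exact hφ
    · exact ((contDiff_const.add (contDiff_id.smul contDiff_const)).contDiffAt)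
  have hℓder : ∀ t : ℝ, HasDerivAt ℓ u t := by
    intro t
    simpa [hℓ] using ((hasDerivAt_id t).smul_const u).const_add x
  have hder_ev : ∀ᶠ t in 𝓝 (0:ℝ), HasDerivAt g (fderiv ℝ φ (ℓ t) u) t := by
    filter_upwards [hℓtendsto.eventually (eventually_differentiableAt hφ)] with t hdiff
    exact hdiff.hasFDerivAt.comp_hasDerivAt t (hℓder t)
  have hderiv_g : deriv g =ᶠ[𝓝 (0:ℝ)] fun t => fderiv ℝ φ (ℓ t) u := by
    filter_upwards [hder_ev] with t ht using ht.deriv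
  have hsecond : HasDerivAt (fun t => fderiv ℝ φ (ℓ t) u)
      (fderiv ℝ (fderiv ℝ φ) x u u) 0 := by
    have h1 : HasDerivAt (fun t => fderiv ℝ φ (ℓ t)) (fderiv ℝ (fderiv ℝ φ) x u) 0 := by
      have hx' : HasFDerivAt (fderiv ℝ φ) (fderiv ℝ (fderiv ℝ φ) x) (ℓ 0) := by
        rw [hℓ0]; exact (fderiv_differentiableAt hφ).hasFDerivAt
      exact hx'.comp_hasDerivAt 0 (hℓder 0)
    simpa using h1.clm_apply (hasDerivAt_const 0 u)
  have hd2 : deriv (deriv g) 0 = fderiv ℝ (fderiv ℝ φ) x u u := by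
    rw [hderiv_g.deriv_eq]
    exact hsecond.deriv
  have hmin_g : ∀ᶠ t in 𝓝 (0:ℝ), g 0 ≤ g t := by
    filter_upwards [hℓtendsto.eventually hmin] with t ht
    simpa [hg, hℓ0] using ht
  have h0 : deriv g 0 = 0 := by
    apply IsLocalMin.deriv_eq_zero
    exact hmin_g
  obtain ⟨δ, hδpos, hδ⟩ := oneDimNeg hgC2 h0 (by rw [hd2]; exact hlt)
  obtain ⟨δ', hδ'pos, hδ'⟩ := Metric.eventually_nhds_iff_ball.1 hmin_g
  set t := min δ δ' / 2 with htdef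
  have htpos : 0 < t := by positivity
  have h1 : g t < g 0 := hδ t
    (by rw [abs_of_pos htpos]; have := min_le_left δ δ'; linarith) (ne_of_gt htpos)
  have h2 : g 0 ≤ g t := hδ' t (by
    simp only [Metric.mem_ball, Real.dist_eq, sub_zero]
    rw [abs_of_pos htpos]; have := min_le_right δ δ'; linarith)
  linarith

/-- Second derivatives add. -/
lemma d2_add {f g : E → ℝ} {x : E} (hf : ContDiffAt ℝ 2 f x) (hg : ContDiffAt ℝ 2 g x)
    (u v : E) :
    fderiv ℝ (fderiv ℝ (fun y => f y + g y)) x u v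
      = fderiv ℝ (fderiv ℝ f) x u v + fderiv ℝ (fderiv ℝ g) x u v := by
  have hev : fderiv ℝ (fun y => f y + g y) =ᶠ[𝓝 x] fun y => fderiv ℝ f y + fderiv ℝ g y := by
    filter_upwards [eventually_differentiableAt hf, eventually_differentiableAt hg] with y h1 h2
    exact fderiv_add h1 h2
  rw [hev.fderiv_eq, fderiv_fun_add (fderiv_differentiableAt hf) (fderiv_differentiableAt hg)]
  simp

/-- Symmetry of the second derivative. -/
lemma d2_symm {φ : E → ℝ} {x : E} (hφ : ContDiffAt ℝ 2 φ x) (u v : E) :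
    fderiv ℝ (fderiv ℝ φ) x u v = fderiv ℝ (fderiv ℝ φ) x v u := by
  have hf : ∀ᶠ y in 𝓝 x, HasFDerivAt φ (fderiv ℝ φ y) y :=
    (eventually_differentiableAt hφ).mono fun y hy => hy.hasFDerivAt
  exact second_derivative_symmetric_of_eventually hf
    (fderiv_differentiableAt hφ).hasFDerivAt u v

end SecondDerivTest

section W

variable {F : Type*} [NormedAddCommGroup F] [InnerProductSpace ℝ F]

local notation "⟪" x ", " y "⟫" => @inner ℝ _ _ x y

noncomputable def wfun (y : F) : ℝ := ‖y‖ ^ ((3:ℝ)/2)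

omit [InnerProductSpace ℝ F] in
lemma wfun_eq : (wfun : F → ℝ) = fun y => (‖y‖^2 : ℝ) ^ ((3:ℝ)/4) := by
  funext y
  rw [wfun, ← Real.rpow_natCast ‖y‖ 2, ← Real.rpow_mul (norm_nonneg y)]
  norm_num

lemma wfun_contDiffAt {x : F} (hx : x ≠ 0) : ContDiffAt ℝ 2 (wfun : F → ℝ) x := by
  rw [wfun_eq]
  exact (Real.contDiffAt_rpow_const_of_ne
    (pow_ne_zero 2 (norm_ne_zero_iff.2 hx))).comp x (contDiff_norm_sq ℝ).contDiffAt

noncomputable def Gm (y : F) : F →L[ℝ] ℝ :=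
  (fderivInnerCLM ℝ (y, y)).comp ((ContinuousLinearMap.id ℝ F).prod (ContinuousLinearMap.id ℝ F))

lemma Gm_apply (y v : F) : Gm y v = 2 * ⟪y, v⟫ := by
  simp [Gm, real_inner_comm y v]
  ring

lemma hasFDerivAt_normsq (y : F) : HasFDerivAt (fun t : F => (‖t‖^2 : ℝ)) (Gm y) y := by
  have h := (hasFDerivAt_id y).inner ℝ (hasFDerivAt_id y)
  simp only [id_eq] at h
  have he : (fun t : F => (⟪t, t⟫ : ℝ)) = fun t : F => (‖t‖^2 : ℝ) := by
    funext t; exact real_inner_self_eq_norm_sq t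
  rw [he] at h
  exact h

noncomputable def cco (y : F) : ℝ := (3:ℝ)/2 * (‖y‖^2 : ℝ) ^ (-(1:ℝ)/4)

lemma wfun_hasFDerivAt {y : F} (hy : y ≠ 0) :
    HasFDerivAt (wfun : F → ℝ) (((3:ℝ)/4 * (‖y‖^2 : ℝ) ^ ((3:ℝ)/4 - 1)) • Gm y) y := by
  rw [wfun_eq]
  exact (Real.hasDerivAt_rpow_const
    (Or.inl (pow_ne_zero 2 (norm_ne_zero_iff.2 hy)))).comp_hasFDerivAt y (hasFDerivAt_normsq y)

lemma fderiv_wfun_apply {y : F} (hy : y ≠ 0) (v : F) :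
    fderiv ℝ (wfun : F → ℝ) y v = cco y * ⟪y, v⟫ := by
  rw [(wfun_hasFDerivAt hy).fderiv]
  have he : (3:ℝ)/4 - 1 = -(1:ℝ)/4 := by norm_num
  simp only [ContinuousLinearMap.smul_apply, Gm_apply, smul_eq_mul, he, cco]
  ring

lemma d2_apply_aux {φ : F → ℝ} {x : F} (h : DifferentiableAt ℝ (fderiv ℝ φ) x) (u v : F) :
    fderiv ℝ (fderiv ℝ φ) x u v = fderiv ℝ (fun y => fderiv ℝ φ y v) x u := by
  have h2 := ((ContinuousLinearMap.apply ℝ ℝ v).hasFDerivAt.comp x h.hasFDerivAt).fderiv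
  have h3 : ((ContinuousLinearMap.apply ℝ ℝ v) ∘ (fderiv ℝ φ)) = fun y => fderiv ℝ φ y v := rfl
  rw [h3] at h2
  rw [h2]
  rfl

lemma cco_hasFDerivAt {y : F} (hy : y ≠ 0) :
    HasFDerivAt (cco : F → ℝ)
      (((3:ℝ)/2) • ((-(1:ℝ)/4 * (‖y‖^2 : ℝ) ^ (-(1:ℝ)/4 - 1)) • Gm y)) y := by
  exact ((Real.hasDerivAt_rpow_const
    (Or.inl (pow_ne_zero 2 (norm_ne_zero_iff.2 hy)))).comp_hasFDerivAt y
    (hasFDerivAt_normsq y)).const_mul ((3:ℝ)/2)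

lemma hasFDerivAt_inner_const (x₀ v : F) :
    HasFDerivAt (fun y : F => (⟪y, v⟫ : ℝ))
      ((fderivInnerCLM ℝ (x₀, v)).comp
        ((ContinuousLinearMap.id ℝ F).prod 0)) x₀ := by
  exact (hasFDerivAt_id x₀).inner ℝ (hasFDerivAt_const v x₀)

/-- Second derivative of `wfun` at `x₀ ≠ 0`. -/
lemma d2_wfun {x₀ : F} (hx : x₀ ≠ 0) (u v : F) :
    fderiv ℝ (fderiv ℝ (wfun : F → ℝ)) x₀ u v
      = cco x₀ * ⟪u, v⟫ - (3:ℝ)/4 * (‖x₀‖^2 : ℝ) ^ (-(5:ℝ)/4) * (⟪x₀, u⟫ * ⟪x₀, v⟫) := by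
  rw [d2_apply_aux (fderiv_differentiableAt (wfun_contDiffAt hx)) u v]
  have hev : (fun y : F => fderiv ℝ (wfun : F → ℝ) y v) =ᶠ[𝓝 x₀]
      (fun y : F => cco y * ⟪y, v⟫) := by
    filter_upwards [eventually_ne_nhds hx] with y hy
    exact fderiv_wfun_apply hy v
  rw [hev.fderiv_eq]
  have hprod := (cco_hasFDerivAt hx).mul (hasFDerivAt_inner_const x₀ v)
  rw [show (fun y : F => cco y * ⟪y, v⟫) = (cco * fun y : F => ⟪y, v⟫) from rfl, hprod.fderiv]
  have he : -(1:ℝ)/4 - 1 = -(5:ℝ)/4 := by norm_num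
  simp only [ContinuousLinearMap.add_apply, ContinuousLinearMap.smul_apply, smul_eq_mul,
    ContinuousLinearMap.comp_apply, ContinuousLinearMap.prod_apply, ContinuousLinearMap.id_apply,
    ContinuousLinearMap.zero_apply, fderivInnerCLM_apply, Gm_apply, he, inner_zero_right]
  ring

end W

section MatrixPart

variable {n : ℕ}

local notation "⟪" x ", " y "⟫" => @inner ℝ _ _ x y

lemma isHermitian_of_symm {M : Matrix (Fin n) (Fin n) ℝ} (h : ∀ i j, M i j = M j i) :
    M.IsHermitian := by
  ext i j
  simp only [Matrix.conjTranspose_apply, star_trivial]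
  exact h j i

lemma euclid_decomp (v : EuclideanSpace ℝ (Fin n)) :
    v = ∑ i, v i • EuclideanSpace.single i 1 := by
  ext j
  rw [WithLp.ofLp_sum, Finset.sum_apply]
  simp [PiLp.smul_apply, EuclideanSpace.single_apply]

lemma quad_expand (B : EuclideanSpace ℝ (Fin n) →L[ℝ] EuclideanSpace ℝ (Fin n) →L[ℝ] ℝ)
    (v : EuclideanSpace ℝ (Fin n)) :
    B v v = ∑ i, ∑ j, v i * v j * B (EuclideanSpace.single i 1) (EuclideanSpace.single j 1) := by
  have e1 : B v v = B (∑ i, v i • EuclideanSpace.single i 1)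
      (∑ j, v j • EuclideanSpace.single j 1) := by rw [← euclid_decomp]
  rw [e1, map_sum]
  have key : ∀ jj, (B (∑ i, v i • EuclideanSpace.single i 1)) (v jj • EuclideanSpace.single jj 1)
       = ∑ i, v i * v jj * B (EuclideanSpace.single i 1) (EuclideanSpace.single jj 1) := by
    intro jj
    rw [map_smul, smul_eq_mul, map_sum, ContinuousLinearMap.sum_apply, Finset.mul_sum]
    refine Finset.sum_congr rfl fun i _ => ?_
    rw [map_smul, ContinuousLinearMap.smul_apply, smul_eq_mul]
    ring
  rw [Finset.sum_congr rfl (fun jj _ => key jj), Finset.sum_comm]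

lemma quad_matrix (M : Matrix (Fin n) (Fin n) ℝ) (v : EuclideanSpace ℝ (Fin n)) :
    (⟪(Matrix.toEuclideanLin M) v, v⟫ : ℝ) = ∑ i, ∑ j, v i * v j * M i j := by
  simp only [PiLp.inner_apply, RCLike.inner_apply, conj_trivial,
    Matrix.toEuclideanLin_apply,
    Matrix.mulVec, dotProduct]
  refine Finset.sum_congr rfl fun i _ => ?_
  rw [Finset.mul_sum]
  exact Finset.sum_congr rfl fun j _ => by ring

variable {M : Matrix (Fin n) (Fin n) ℝ} (hM : M.IsHermitian)

lemma eig_apply (j : Fin n) : (Matrix.toEuclideanLin M) (hM.eigenvectorBasis j)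
    = hM.eigenvalues j • hM.eigenvectorBasis j := by
  have h := hM.mulVec_eigenvectorBasis j
  rw [Matrix.toEuclideanLin_apply]
  ext i
  rw [h]
  rfl

lemma eig_ortho (i j : Fin n) :
    (⟪hM.eigenvectorBasis i, hM.eigenvectorBasis j⟫ : ℝ) = if i = j then 1 else 0 :=
  orthonormal_iff_ite.mp hM.eigenvectorBasis.orthonormal i j

lemma eig_quad (j : Fin n) :
    (⟪(Matrix.toEuclideanLin M) (hM.eigenvectorBasis j), hM.eigenvectorBasis j⟫ : ℝ)
      = hM.eigenvalues j := by
  rw [eig_apply, real_inner_smul_left, eig_ortho]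
  simp

lemma eig_quad_combo {j k : Fin n} (hjk : j ≠ k) (α β : ℝ) :
    (⟪(Matrix.toEuclideanLin M) (α • hM.eigenvectorBasis j + β • hM.eigenvectorBasis k),
        α • hM.eigenvectorBasis j + β • hM.eigenvectorBasis k⟫ : ℝ)
      = α^2 * hM.eigenvalues j + β^2 * hM.eigenvalues k := by
  rw [map_add, map_smul, map_smul, eig_apply, eig_apply]
  simp only [inner_add_left, inner_add_right, real_inner_smul_left, real_inner_smul_right,
    smul_smul, eig_ortho, hjk, hjk.symm, if_true, if_false]
  simp [eig_ortho, hjk, hjk.symm]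
  ring

lemma combo_normsq {j k : Fin n} (hjk : j ≠ k) (α β : ℝ) :
    (⟪(α • hM.eigenvectorBasis j + β • hM.eigenvectorBasis k : EuclideanSpace ℝ (Fin n)),
        α • hM.eigenvectorBasis j + β • hM.eigenvectorBasis k⟫ : ℝ) = α^2 + β^2 := by
  simp only [inner_add_left, inner_add_right, real_inner_smul_left, real_inner_smul_right,
    eig_ortho, hjk, hjk.symm, if_false, if_true]
  simp [eig_ortho, hjk, hjk.symm]
  ring

lemma combo_inner {j k : Fin n} (α β : ℝ) (x : EuclideanSpace ℝ (Fin n)) :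
    (⟪x, α • hM.eigenvectorBasis j + β • hM.eigenvectorBasis k⟫ : ℝ)
      = α * ⟪x, hM.eigenvectorBasis j⟫ + β * ⟪x, hM.eigenvectorBasis k⟫ := by
  rw [inner_add_right, real_inner_smul_right, real_inner_smul_right]

lemma eig_quad_expansion (v : EuclideanSpace ℝ (Fin n)) :
    (⟪(Matrix.toEuclideanLin M) v, v⟫ : ℝ)
      = ∑ i, hM.eigenvalues i * (⟪hM.eigenvectorBasis i, v⟫ : ℝ)^2 := by
  have hrep := hM.eigenvectorBasis.sum_repr' v
  have hTv : (Matrix.toEuclideanLin M) v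
      = ∑ i, ((⟪hM.eigenvectorBasis i, v⟫ : ℝ) * hM.eigenvalues i) • hM.eigenvectorBasis i := by
    conv_lhs => rw [← hrep]
    rw [map_sum]
    exact Finset.sum_congr rfl fun i _ => by rw [map_smul, eig_apply, smul_smul]
  rw [hTv, sum_inner]
  exact Finset.sum_congr rfl fun i _ => by rw [real_inner_smul_left]; ring

lemma normsq_expansion (v : EuclideanSpace ℝ (Fin n)) :
    (⟪v, v⟫ : ℝ) = ∑ i, (⟪hM.eigenvectorBasis i, v⟫ : ℝ)^2 := by
  have hrep := hM.eigenvectorBasis.sum_repr' v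
  nth_rewrite 1 [← hrep]
  rw [sum_inner]
  exact Finset.sum_congr rfl fun i _ => by rw [real_inner_smul_left]; ring

end MatrixPart

section SumLemmas

lemma sum_split {n : ℕ} (f : Fin n → ℝ) (i₀ : Fin n) :
    ∑ i, f i = f i₀ + ∑ i ∈ Finset.univ.erase i₀, f i :=
  (Finset.add_sum_erase _ f (Finset.mem_univ i₀)).symm

lemma erase_card {n : ℕ} (i₀ : Fin n) : (Finset.univ.erase i₀).card = n - 1 := by
  rw [Finset.card_erase_of_mem (Finset.mem_univ i₀), Finset.card_univ, Fintype.card_fin]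

lemma erase_sum_ge {n : ℕ} (hn : 1 ≤ n) {lam : Fin n → ℝ} {b : ℝ} (i₀ : Fin n)
    (h : ∀ i ∈ Finset.univ.erase i₀, b ≤ lam i) :
    ((n:ℝ) - 1) * Real.arctan b ≤ ∑ i ∈ Finset.univ.erase i₀, Real.arctan (lam i) := by
  have h1 : (Finset.univ.erase i₀).card • Real.arctan b
      ≤ ∑ i ∈ Finset.univ.erase i₀, Real.arctan (lam i) :=
    Finset.card_nsmul_le_sum _ _ _ fun i hi => Real.arctan_strictMono.monotone (h i hi)
  rw [erase_card, nsmul_eq_mul] at h1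
  have : ((n - 1 : ℕ) : ℝ) = (n : ℝ) - 1 := by
    rw [Nat.cast_sub hn]; simp
  rwa [this] at h1

lemma erase_sum_le {n : ℕ} (hn : 1 ≤ n) {lam : Fin n → ℝ} {b : ℝ} (i₀ : Fin n)
    (h : ∀ i ∈ Finset.univ.erase i₀, lam i ≤ b) :
    ∑ i ∈ Finset.univ.erase i₀, Real.arctan (lam i) ≤ ((n:ℝ) - 1) * Real.arctan b := by
  have h1 : ∑ i ∈ Finset.univ.erase i₀, Real.arctan (lam i)
      ≤ (Finset.univ.erase i₀).card • Real.arctan b :=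
    Finset.sum_le_card_nsmul _ _ _ fun i hi => Real.arctan_strictMono.monotone (h i hi)
  rw [erase_card, nsmul_eq_mul] at h1
  have : ((n - 1 : ℕ) : ℝ) = (n : ℝ) - 1 := by
    rw [Nat.cast_sub hn]; simp
  rwa [this] at h1

lemma sumA {n : ℕ} (hn : 1 ≤ n) {lam : Fin n → ℝ} {a b : ℝ} (hab : a ≤ b)
    (hall : ∀ i, a ≤ lam i) (hpair : ∀ j k, j ≠ k → lam j < b → b ≤ lam k) :
    Real.arctan a + ((n:ℝ) - 1) * Real.arctan b ≤ ∑ i, Real.arctan (lam i) := by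
  by_cases hex : ∃ i₀, lam i₀ < b
  · obtain ⟨i₀, hi₀⟩ := hex
    rw [sum_split (fun i => Real.arctan (lam i)) i₀]
    have h1 : Real.arctan a ≤ Real.arctan (lam i₀) :=
      Real.arctan_strictMono.monotone (hall i₀)
    have h2 := erase_sum_ge hn i₀ (fun i hi =>
      hpair i₀ i (Ne.symm (Finset.ne_of_mem_erase hi)) hi₀)
    linarith
  · push_neg at hex
    have h1 : Real.arctan a ≤ Real.arctan b := Real.arctan_strictMono.monotone hab
    rw [sum_split (fun i => Real.arctan (lam i)) ⟨0, hn⟩]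
    have h2 := erase_sum_ge hn (⟨0, hn⟩ : Fin n) (fun i _ => hex i)
    have h3 : Real.arctan b ≤ Real.arctan (lam ⟨0, hn⟩) :=
      Real.arctan_strictMono.monotone (hex _)
    linarith

lemma sumB {n : ℕ} (hn : 1 ≤ n) {lam : Fin n → ℝ} {a b : ℝ}
    (hall : ∀ i, lam i ≤ b) {i₀ : Fin n} (hi₀ : lam i₀ ≤ a) :
    ∑ i, Real.arctan (lam i) ≤ Real.arctan a + ((n:ℝ) - 1) * Real.arctan b := by
  rw [sum_split (fun i => Real.arctan (lam i)) i₀]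
  have h1 : Real.arctan (lam i₀) ≤ Real.arctan a := Real.arctan_strictMono.monotone hi₀
  have h2 := erase_sum_le hn i₀ (fun i _ => hall i)
  linarith

end SumLemmas


section Main

variable {n : ℕ}

local notation "⟪" x ", " y "⟫" => @inner ℝ _ _ x y

lemma hess_apply (φ : EuclideanSpace ℝ (Fin n) → ℝ) (x : EuclideanSpace ℝ (Fin n)) (i j : Fin n) :
    hess φ x i j = fderiv ℝ (fderiv ℝ φ) x (EuclideanSpace.single i 1)
      (EuclideanSpace.single j 1) := by
  simp only [hess, iteratedFDeriv_two_apply]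
  simp

lemma hess_herm {φ : EuclideanSpace ℝ (Fin n) → ℝ} {x : EuclideanSpace ℝ (Fin n)}
    (hφ : ContDiffAt ℝ 2 φ x) : (hess φ x).IsHermitian :=
  isHermitian_of_symm fun i j => by rw [hess_apply, hess_apply]; exact d2_symm hφ _ _

lemma hess_quad (φ : EuclideanSpace ℝ (Fin n) → ℝ) (x : EuclideanSpace ℝ (Fin n))
    (v : EuclideanSpace ℝ (Fin n)) :
    (⟪(Matrix.toEuclideanLin (hess φ x)) v, v⟫ : ℝ) = fderiv ℝ (fderiv ℝ φ) x v v := by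
  rw [quad_matrix, quad_expand (fderiv ℝ (fderiv ℝ φ) x) v]
  exact Finset.sum_congr rfl fun i _ => Finset.sum_congr rfl fun j _ => by rw [hess_apply]

open scoped Classical in
lemma slF_eq {M : Matrix (Fin n) (Fin n) ℝ} (hM : M.IsHermitian) :
    slF M = ∑ i, Real.arctan (hM.eigenvalues i) := by
  unfold slF
  rw [dif_pos hM]

open scoped Classical in
lemma slF_le (M : Matrix (Fin n) (Fin n) ℝ) : slF M ≤ n * (π / 2) := by
  unfold slF
  split_ifs with h
  · calc ∑ i, Real.arctan (h.eigenvalues i) ≤ ∑ _i : Fin n, π/2 :=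
        Finset.sum_le_sum fun i _ => (Real.arctan_lt_pi_div_two _).le
      _ = n * (π/2) := by
        rw [Finset.sum_const, Finset.card_univ, Fintype.card_fin, nsmul_eq_mul]
  · positivity

lemma scalar_facts {x : EuclideanSpace ℝ (Fin n)} (hx : x ≠ 0) :
    cco x = (3:ℝ)/2 * ‖x‖ ^ (-(1:ℝ)/2) ∧
    cco x - ((3:ℝ)/4 * (‖x‖^2 : ℝ) ^ (-(5:ℝ)/4)) * (‖x‖^2) = (3:ℝ)/4 * ‖x‖ ^ (-(1:ℝ)/2) := by
  have hnx : (0:ℝ) < ‖x‖ := norm_pos_iff.2 hx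
  have h1 : ((‖x‖^2 : ℝ)) ^ (-(1:ℝ)/4) = ‖x‖ ^ (-(1:ℝ)/2) := by
    rw [← Real.rpow_natCast ‖x‖ 2, ← Real.rpow_mul (norm_nonneg x)]
    norm_num
  have h2 : ((‖x‖^2 : ℝ)) ^ (-(5:ℝ)/4) * (‖x‖^2) = ((‖x‖^2 : ℝ)) ^ (-(1:ℝ)/4) := by
    have hs : (0:ℝ) < ‖x‖^2 := by positivity
    nth_rewrite 2 [← Real.rpow_one (‖x‖^2 : ℝ)]
    rw [← Real.rpow_add hs]
    norm_num
  constructor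
  · rw [cco, h1]
  · rw [cco, mul_assoc, h2, h1]; ring

lemma main_sub (hn : 1 ≤ n) {φ : EuclideanSpace ℝ (Fin n) → ℝ} {x : EuclideanSpace ℝ (Fin n)}
    (hx : x ≠ 0) (hφ : ContDiffAt ℝ 2 φ x)
    (hQ : ∀ u : EuclideanSpace ℝ (Fin n),
      fderiv ℝ (fderiv ℝ (wfun : EuclideanSpace ℝ (Fin n) → ℝ)) x u u
        ≤ fderiv ℝ (fderiv ℝ φ) x u u) :
    Real.arctan ((3/4) * ‖x‖ ^ (-(1:ℝ)/2)) + ((n:ℝ) - 1) * Real.arctan ((3/2) * ‖x‖ ^ (-(1:ℝ)/2))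
      ≤ slF (hess φ x) := by
  have hM : (hess φ x).IsHermitian := hess_herm hφ
  set b : ℝ := cco x with hbdef
  set κ : ℝ := (3:ℝ)/4 * (‖x‖^2 : ℝ) ^ (-(5:ℝ)/4) with hκdef
  set a : ℝ := b - κ * ‖x‖^2 with hadef
  obtain ⟨hb', ha'⟩ := scalar_facts hx
  have hκpos : 0 ≤ κ := by positivity
  have hs : (0:ℝ) < ‖x‖^2 := by
    have h0 : ‖x‖ ≠ 0 := norm_ne_zero_iff.2 hx
    positivity
  have hab : a ≤ b := by nlinarith
  set lam := hM.eigenvalues with hlam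
  set u := hM.eigenvectorBasis with hu
  have hwq : ∀ v v' : EuclideanSpace ℝ (Fin n),
      fderiv ℝ (fderiv ℝ (wfun : EuclideanSpace ℝ (Fin n) → ℝ)) x v v'
        = b * ⟪v, v'⟫ - κ * (⟪x, v⟫ * ⟪x, v'⟫) := fun v v' => d2_wfun hx v v'
  have hlam_eq : ∀ i, lam i = fderiv ℝ (fderiv ℝ φ) x (u i) (u i) := by
    intro i
    rw [← hess_quad φ x (u i), eig_quad hM i]
  have huu : ∀ i, (⟪u i, u i⟫ : ℝ) = 1 := by
    intro i; rw [eig_ortho hM i i, if_pos rfl]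
  have hall : ∀ i, a ≤ lam i := by
    intro i
    have h2 := hQ (u i)
    rw [hwq, huu i, mul_one] at h2
    have h4 : (⟪x, u i⟫ : ℝ) * ⟪x, u i⟫ ≤ ‖x‖^2 := by
      have := real_inner_mul_inner_self_le x (u i)
      rwa [huu i, mul_one, real_inner_self_eq_norm_sq] at this
    rw [hlam_eq i]
    nlinarith
  have hpair : ∀ j k, j ≠ k → lam j < b → b ≤ lam k := by
    intro j k hjk hj
    by_contra hk
    push_neg at hk
    set cj : ℝ := ⟪x, u j⟫ with hcj
    set ck : ℝ := ⟪x, u k⟫ with hck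
    by_cases hzero : ck = 0 ∧ cj = 0
    · have h2 := hQ (u j)
      rw [hwq, huu j, mul_one, ← hcj, hzero.2] at h2
      rw [← hlam_eq j] at h2
      simp at h2
      linarith
    · set α : ℝ := ck with hα
      set β : ℝ := -cj with hβ
      set v : EuclideanSpace ℝ (Fin n) := α • u j + β • u k with hv
      have hSv : (⟪(Matrix.toEuclideanLin (hess φ x)) v, v⟫ : ℝ)
          = α^2 * lam j + β^2 * lam k := eig_quad_combo hM hjk α β
      have hxv : (⟪x, v⟫ : ℝ) = 0 := by
        rw [hv, combo_inner hM, ← hcj, ← hck]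
        simp [hα, hβ]
        ring
      have hvv : (⟪v, v⟫ : ℝ) = α^2 + β^2 := combo_normsq hM hjk α β
      have h2 := hQ v
      rw [hwq, hxv, hvv] at h2
      rw [← hess_quad φ x v, hSv] at h2
      simp only [mul_zero, sub_zero] at h2
      rcases not_and_or.mp hzero with hne | hne
      · have hα2 : 0 < α^2 := (sq_nonneg α).lt_of_ne (Ne.symm (pow_ne_zero 2 hne))
        nlinarith [sq_nonneg β]
      · have hβ2 : 0 < β^2 := by
          have : β ≠ 0 := by simp [hβ, hne]
          exact (sq_nonneg β).lt_of_ne (Ne.symm (pow_ne_zero 2 this))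
        nlinarith [sq_nonneg α]
  rw [slF_eq hM, ← ha', ← hb']
  have ha2 : a = b - κ * ‖x‖^2 := hadef
  rw [← hadef] at ha' ⊢
  exact sumA hn hab hall hpair

lemma main_super (hn : 1 ≤ n) {ψ : EuclideanSpace ℝ (Fin n) → ℝ} {x : EuclideanSpace ℝ (Fin n)}
    (hx : x ≠ 0) (hψ : ContDiffAt ℝ 2 ψ x)
    (hQ : ∀ u : EuclideanSpace ℝ (Fin n),
      fderiv ℝ (fderiv ℝ ψ) x u u
        ≤ fderiv ℝ (fderiv ℝ (wfun : EuclideanSpace ℝ (Fin n) → ℝ)) x u u) :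
    slF (hess ψ x)
      ≤ Real.arctan ((3/4) * ‖x‖ ^ (-(1:ℝ)/2))
        + ((n:ℝ) - 1) * Real.arctan ((3/2) * ‖x‖ ^ (-(1:ℝ)/2)) := by
  have hM : (hess ψ x).IsHermitian := hess_herm hψ
  set b : ℝ := cco x with hbdef
  set κ : ℝ := (3:ℝ)/4 * (‖x‖^2 : ℝ) ^ (-(5:ℝ)/4) with hκdef
  set a : ℝ := b - κ * ‖x‖^2 with hadef
  obtain ⟨hb', ha'⟩ := scalar_facts hx
  have hκpos : 0 ≤ κ := by positivity
  have hs : (0:ℝ) < ‖x‖^2 := by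
    have h0 : ‖x‖ ≠ 0 := norm_ne_zero_iff.2 hx
    positivity
  set lam := hM.eigenvalues with hlam
  set u := hM.eigenvectorBasis with hu
  have hwq : ∀ v v' : EuclideanSpace ℝ (Fin n),
      fderiv ℝ (fderiv ℝ (wfun : EuclideanSpace ℝ (Fin n) → ℝ)) x v v'
        = b * ⟪v, v'⟫ - κ * (⟪x, v⟫ * ⟪x, v'⟫) := fun v v' => d2_wfun hx v v'
  have hlam_eq : ∀ i, lam i = fderiv ℝ (fderiv ℝ ψ) x (u i) (u i) := by
    intro i
    rw [← hess_quad ψ x (u i), eig_quad hM i]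
  have huu : ∀ i, (⟪u i, u i⟫ : ℝ) = 1 := by
    intro i; rw [eig_ortho hM i i, if_pos rfl]
  have hall : ∀ i, lam i ≤ b := by
    intro i
    have h2 := hQ (u i)
    rw [hwq, huu i, mul_one] at h2
    rw [hlam_eq i]
    nlinarith [mul_self_nonneg (⟪x, u i⟫ : ℝ)]
  -- minimum eigenvalue
  obtain ⟨i₀, _, hmin⟩ := Finset.exists_min_image Finset.univ lam
    ⟨⟨0, hn⟩, Finset.mem_univ _⟩
  have hxx : (⟪x, x⟫ : ℝ) = ‖x‖^2 := real_inner_self_eq_norm_sq x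
  have hSx : (∑ i, lam i * (⟪u i, x⟫ : ℝ)^2) ≤ a * ‖x‖^2 := by
    have h2 := hQ x
    rw [hwq, hxx] at h2
    rw [hlam, hu, ← eig_quad_expansion hM x, hess_quad ψ x x]
    calc fderiv ℝ (fderiv ℝ ψ) x x x
        ≤ b * ‖x‖^2 - κ * (‖x‖^2 * ‖x‖^2) := h2
      _ = a * ‖x‖^2 := by rw [hadef]; ring
  have hnormx : (∑ i, (⟪u i, x⟫ : ℝ)^2) = ‖x‖^2 := by
    rw [← normsq_expansion hM x, hxx]
  have hi₀ : lam i₀ ≤ a := by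
    have hlow : lam i₀ * ‖x‖^2 ≤ ∑ i, lam i * (⟪u i, x⟫ : ℝ)^2 := by
      rw [← hnormx, Finset.mul_sum]
      exact Finset.sum_le_sum fun i _ =>
        mul_le_mul_of_nonneg_right (hmin i (Finset.mem_univ i)) (sq_nonneg _)
    have := hlow.trans hSx
    exact le_of_mul_le_mul_right this hs
  rw [slF_eq hM, ← ha', ← hb', ← hadef]
  exact sumB hn hall hi₀

lemma zero_case (hn : 1 ≤ n) {φ : EuclideanSpace ℝ (Fin n) → ℝ}
    (hφ : ContDiffAt ℝ 2 φ (0 : EuclideanSpace ℝ (Fin n)))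
    (hle : ∀ᶠ y in 𝓝 (0 : EuclideanSpace ℝ (Fin n)), ‖y‖ ^ ((3:ℝ)/2) ≤ φ y)
    (heq : φ 0 = 0) : False := by
  set e₀ : EuclideanSpace ℝ (Fin n) := EuclideanSpace.single ⟨0, hn⟩ 1 with he₀def
  have he₀ : ‖e₀‖ = 1 := by rw [he₀def, EuclideanSpace.norm_single]; norm_num
  set ℓ : ℝ → EuclideanSpace ℝ (Fin n) := fun t => t • e₀ with hℓ
  have hℓ0 : ℓ 0 = 0 := by simp [hℓ]
  have hℓnorm : ∀ t, ‖ℓ t‖ = |t| := by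
    intro t; rw [hℓ]; simp [norm_smul, he₀]
  have hℓtendsto : Filter.Tendsto ℓ (𝓝 0) (𝓝 0) := by
    have : Continuous ℓ := continuous_id.smul continuous_const
    have h := this.tendsto 0
    rwa [hℓ0] at h
  set g : ℝ → ℝ := fun t => φ (ℓ t) with hg
  have hg0 : g 0 = 0 := by rw [hg]; simp only [hℓ0]; exact heq
  have hgC2 : ContDiffAt ℝ 2 g 0 := by
    apply ContDiffAt.comp (x := 0)
    · rw [hℓ0]; exact hφ
    · exact (contDiff_id.smul contDiff_const).contDiffAt
  have hlow : ∀ᶠ t in 𝓝 (0:ℝ), |t| ^ ((3:ℝ)/2) ≤ g t := by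
    filter_upwards [hℓtendsto.eventually hle] with t ht
    rwa [hℓnorm t] at ht
  set B : ℝ := deriv g 0 with hB
  set A : ℝ := deriv (deriv g) 0 with hA
  set C : ℝ := A/2 + 1 with hC
  have hpoly : ∀ t : ℝ, HasDerivAt (fun t : ℝ => g 0 + B * t + C * t^2)
      (B + C * (2 * t)) t := by
    intro t
    have h1 : HasDerivAt (fun t : ℝ => B * t) B t := by
      simpa using (hasDerivAt_id t).const_mul B
    have h2 : HasDerivAt (fun t : ℝ => C * t^2) (C * (2 * t)) t := by
      have := (hasDerivAt_pow 2 t).const_mul C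
      simpa [mul_comm] using this
    exact (h1.const_add (g 0)).add h2
  set q : ℝ → ℝ := fun t => g t - (g 0 + B * t + C * t^2) with hq
  have hq0 : q 0 = 0 := by simp [hq]
  have hqC2 : ContDiffAt ℝ 2 q 0 := by
    apply hgC2.sub
    exact ((contDiff_const.add (contDiff_const.mul contDiff_id)).add
      (contDiff_const.mul (contDiff_id.pow 2))).contDiffAt
  have hqd0 : deriv q 0 = 0 := by
    rw [hq]
    rw [deriv_fun_sub (hgC2.differentiableAt (by norm_num)) (hpoly 0).differentiableAt]
    rw [(hpoly 0).deriv]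
    simp [hB]
  have hqdd : deriv (deriv q) 0 = -2 := by
    have hev : deriv q =ᶠ[𝓝 (0:ℝ)] fun t => deriv g t - (B + C * (2 * t)) := by
      filter_upwards [eventually_differentiableAt hgC2] with t ht
      rw [hq, deriv_fun_sub ht (hpoly t).differentiableAt, (hpoly t).deriv]
    rw [hev.deriv_eq]
    have hlin : HasDerivAt (fun t : ℝ => B + C * (2 * t)) (C * 2) 0 := by
      have : HasDerivAt (fun t : ℝ => 2 * t) 2 0 := by
        simpa using (hasDerivAt_id (0:ℝ)).const_mul 2
      simpa using (this.const_mul C).const_add B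
    rw [deriv_fun_sub (deriv_differentiableAt hgC2) hlin.differentiableAt, hlin.deriv]
    rw [← hA, hC]
    ring
  obtain ⟨δ, hδpos, hδ⟩ := oneDimNeg hqC2 hqd0 (by rw [hqdd]; norm_num)
  obtain ⟨δ₂, hδ₂pos, hδ₂⟩ := Metric.eventually_nhds_iff_ball.1 hlow
  set m : ℝ := max C 1 with hm
  have hmpos : (0:ℝ) < m := lt_of_lt_of_le one_pos (le_max_right _ _)
  set τ : ℝ := min (min δ δ₂) ((1/m)^2) / 2 with hτ
  have hτpos : 0 < τ := by
    apply div_pos _ two_pos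
    apply lt_min (lt_min hδpos hδ₂pos)
    positivity
  set t₀ : ℝ := if B ≤ 0 then τ else -τ with ht₀
  have ht₀abs : |t₀| = τ := by
    rw [ht₀]; split_ifs
    · exact abs_of_pos hτpos
    · rw [abs_neg]; exact abs_of_pos hτpos
  have hBt₀ : B * t₀ ≤ 0 := by
    rw [ht₀]; split_ifs with h
    · exact mul_nonpos_of_nonpos_of_nonneg h hτpos.le
    · push_neg at h
      have : B * -τ = -(B * τ) := by ring
      rw [this]
      exact neg_nonpos_of_nonneg (mul_nonneg h.le hτpos.le)
  have ht₀ne : t₀ ≠ 0 := by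
    rw [ht₀]; split_ifs
    · exact ne_of_gt hτpos
    · exact neg_ne_zero.2 (ne_of_gt hτpos)
  have hτδ : τ < δ := by
    have h1 := min_le_left (min δ δ₂) ((1/m)^2)
    have h2 := min_le_left δ δ₂
    rw [hτ]; linarith
  have hτδ₂ : τ < δ₂ := by
    have h1 := min_le_left (min δ δ₂) ((1/m)^2)
    have h2 := min_le_right δ δ₂
    rw [hτ]; linarith
  have hτm : τ < (1/m)^2 := by
    have h1 := min_le_right (min δ δ₂) ((1/m)^2)
    have : (0:ℝ) < (1/m)^2 := by positivity
    rw [hτ]; linarith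
  -- q t₀ < 0
  have hq_neg : q t₀ < 0 := by
    have := hδ t₀ (by rw [ht₀abs]; exact hτδ) ht₀ne
    rwa [hq0] at this
  -- lower bound
  have hglow : |t₀| ^ ((3:ℝ)/2) ≤ g t₀ := hδ₂ t₀ (by
    simp only [Metric.mem_ball, Real.dist_eq, sub_zero]
    rw [ht₀abs]; exact hτδ₂)
  -- combining
  have hkey : τ ^ ((3:ℝ)/2) < C * τ^2 := by
    have h1 : g t₀ < g 0 + B * t₀ + C * t₀^2 := by
      rw [hq] at hq_neg; simp only at hq_neg; linarith
    have h2 : t₀^2 = τ^2 := by rw [← sq_abs, ht₀abs]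
    rw [ht₀abs] at hglow
    rw [hg0] at h1
    have h3 : C * t₀^2 = C * τ^2 := by rw [h2]
    calc τ ^ ((3:ℝ)/2) ≤ g t₀ := hglow
      _ < 0 + B * t₀ + C * t₀^2 := h1
      _ ≤ C * t₀^2 := by linarith
      _ = C * τ^2 := h3
  have hrw : τ^2 = τ ^ ((3:ℝ)/2) * τ ^ ((1:ℝ)/2) := by
    rw [← Real.rpow_natCast τ 2, ← Real.rpow_add hτpos]
    norm_num
  have h32pos : (0:ℝ) < τ ^ ((3:ℝ)/2) := Real.rpow_pos_of_pos hτpos _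
  have hgt1 : 1 < C * τ ^ ((1:ℝ)/2) := by
    rw [hrw] at hkey
    have : 1 * τ ^ ((3:ℝ)/2) < (C * τ ^ ((1:ℝ)/2)) * τ ^ ((3:ℝ)/2) := by
      rw [one_mul]; nlinarith
    exact lt_of_mul_lt_mul_right this h32pos.le
  have hlt1 : C * τ ^ ((1:ℝ)/2) < 1 := by
    have hhalf : τ ^ ((1:ℝ)/2) < 1/m := by
      have := Real.rpow_lt_rpow hτpos.le hτm (by norm_num : (0:ℝ) < 1/2)
      rwa [← Real.rpow_natCast (1/m) 2, ← Real.rpow_mul (by positivity : (0:ℝ) ≤ 1/m),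
        (by norm_num : ((2:ℕ):ℝ) * (1/2) = 1), Real.rpow_one] at this
    have hC_le : C ≤ m := le_max_left _ _
    have hτh_pos : (0:ℝ) < τ ^ ((1:ℝ)/2) := Real.rpow_pos_of_pos hτpos _
    calc C * τ ^ ((1:ℝ)/2) ≤ m * τ ^ ((1:ℝ)/2) :=
          mul_le_mul_of_nonneg_right hC_le hτh_pos.le
      _ < m * (1/m) := by exact mul_lt_mul_of_pos_left hhalf hmpos
      _ = 1 := by field_simp
  linarith

end Main

open scoped Classical in
theorem stmt14 (n : ℕ) (hn : 1 ≤ n) :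
    IsSubsolution Set.univ (fun x : EuclideanSpace ℝ (Fin n) => ‖x‖ ^ ((3:ℝ)/2))
      (fun x => if x = 0 then n * (π / 2)
        else Real.arctan ((3/4) * ‖x‖ ^ (-(1:ℝ)/2))
          + ((n : ℝ) - 1) * Real.arctan ((3/2) * ‖x‖ ^ (-(1:ℝ)/2))) ∧
    IsSupersolution Set.univ (fun x : EuclideanSpace ℝ (Fin n) => ‖x‖ ^ ((3:ℝ)/2))
      (fun x => if x = 0 then n * (π / 2)
        else Real.arctan ((3/4) * ‖x‖ ^ (-(1:ℝ)/2))
          + ((n : ℝ) - 1) * Real.arctan ((3/2) * ‖x‖ ^ (-(1:ℝ)/2))) := by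
  constructor
  · intro x _ φ hφ hle heq
    by_cases hx : x = 0
    · subst hx
      dsimp only
      rw [if_pos rfl]
      have heq' : φ 0 = 0 := by
        rw [heq]; simp [Real.zero_rpow (by norm_num : (3:ℝ)/2 ≠ 0)]
      exact (zero_case hn hφ hle heq').elim
    · dsimp only
      rw [if_neg hx]
      set δf : EuclideanSpace ℝ (Fin n) → ℝ := fun y => φ y - wfun y with hδf
      have hδ : ContDiffAt ℝ 2 δf x := hφ.sub (wfun_contDiffAt hx)
      have hminδ : ∀ᶠ y in 𝓝 x, δf x ≤ δf y := by
        have hδfx : δf x = 0 := by rw [hδf]; simp only [wfun]; rw [heq]; ring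
        filter_upwards [hle] with y hy
        rw [hδfx, hδf]
        simp only [wfun]
        linarith
      have htest := secondDerivTest hδ hminδ
      have hQ : ∀ u : EuclideanSpace ℝ (Fin n),
          fderiv ℝ (fderiv ℝ (wfun : EuclideanSpace ℝ (Fin n) → ℝ)) x u u
            ≤ fderiv ℝ (fderiv ℝ φ) x u u := by
        intro u
        have hsum := d2_add hδ (wfun_contDiffAt hx) u u
        have hfun : (fun y => δf y + wfun y) = φ := by
          funext y; simp only [hδf]; ring
        rw [hfun] at hsum
        have := htest u
        linarith
      exact main_sub hn hx hφ hQ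
  · intro x _ ψ hψ hle heq
    by_cases hx : x = 0
    · subst hx
      dsimp only
      rw [if_pos rfl]
      exact slF_le _
    · dsimp only
      rw [if_neg hx]
      set δf : EuclideanSpace ℝ (Fin n) → ℝ := fun y => wfun y - ψ y with hδf
      have hδ : ContDiffAt ℝ 2 δf x := (wfun_contDiffAt hx).sub hψ
      have hminδ : ∀ᶠ y in 𝓝 x, δf x ≤ δf y := by
        have hδfx : δf x = 0 := by rw [hδf]; simp only [wfun]; rw [heq]; ring
        filter_upwards [hle] with y hy
        rw [hδfx, hδf]
        simp only [wfun]
        linarith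
      have htest := secondDerivTest hδ hminδ
      have hQ : ∀ u : EuclideanSpace ℝ (Fin n),
          fderiv ℝ (fderiv ℝ ψ) x u u
            ≤ fderiv ℝ (fderiv ℝ (wfun : EuclideanSpace ℝ (Fin n) → ℝ)) x u u := by
        intro u
        have hsum := d2_add hψ hδ u u
        have hfun : (fun y => ψ y + δf y) = wfun := by
          funext y; simp only [hδf]; ring
        rw [hfun] at hsum
        have := htest u
        linarith
      exact main_super hn hx hψ hQ
end
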